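/- Let f(n,k) denote the minimum number of cliques, each on at most k vertices, needed to partition the edge set of K_n. Then for √n ≤ k < n, f(n,k) ≥ n/4. -/

import Mathlib

/-- `P` is a clique partition of `G`. -/
def IsCliquePartition {V : Type*} (G : SimpleGraph V) (P : Finset (Finset V)) : Prop :=
  (∀ Q ∈ P, ∀ u ∈ Q, ∀ v ∈ Q, u ≠ v → G.Adj u v) ∧
  (∀ u v : V, G.Adj u v → ∃! Q : Finset V, Q ∈ P ∧ u ∈ Q ∧ v ∈ Q)

/-- Any partition of the edge set of `K_n` into cliques each on at most `k`
vertices, where `√n ≤ k < n`, uses at least `n/4` cliques. -/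
theorem stmt4 (n k : ℕ) (hk : Real.sqrt n ≤ k) (hkn : k < n)
    (P : Finset (Finset (Fin n))) (hP : IsCliquePartition (⊤ : SimpleGraph (Fin n)) P)
    (hsize : ∀ Q ∈ P, Q.card ≤ k) :
    (n : ℝ) / 4 ≤ P.card := by
  classical
  obtain ⟨hcl, huniq⟩ := hP
  -- n ≥ 2
  have hn2 : 2 ≤ n := by
    by_contra h
    interval_cases n
    · exact Nat.not_lt_zero k hkn
    · have hk0 : k = 0 := by omega
      subst hk0
      norm_num [Real.sqrt_one] at hk
  -- an edge
  set a : Fin n := ⟨0, by omega⟩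
  set b : Fin n := ⟨1, by omega⟩
  have hab : a ≠ b := by simp [a, b, Fin.ext_iff]
  obtain ⟨Q₁, hQ₁⟩ := (huniq a b (by simpa using hab)).exists
  obtain ⟨Q₀, hQ₀P, hmax⟩ := Finset.exists_max_image P Finset.card ⟨Q₁, hQ₁.1⟩
  have hm2 : 2 ≤ Q₀.card :=
    le_trans (Finset.one_lt_card.mpr ⟨a, hQ₁.2.1, b, hQ₁.2.2, hab⟩) (hmax Q₁ hQ₁.1)
  have hmn : Q₀.card < n := lt_of_le_of_lt (hsize Q₀ hQ₀P) hkn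
  -- a vertex outside Q₀
  obtain ⟨w, hw⟩ : ∃ w : Fin n, w ∉ Q₀ := by
    by_contra h
    push_neg at h
    have hle : (Finset.univ : Finset (Fin n)).card ≤ Q₀.card :=
      Finset.card_le_card (fun x _ => h x)
    simp only [Finset.card_univ, Fintype.card_fin] at hle
    omega
  -- key: any vertex outside Q₀ is in at least Q₀.card cliques
  have key : ∀ v : Fin n, v ∉ Q₀ → Q₀.card ≤ (P.filter (fun Q => v ∈ Q)).card := by
    intro v hv
    have hadj : ∀ u ∈ Q₀, (⊤ : SimpleGraph (Fin n)).Adj u v := by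
      intro u hu
      simp only [SimpleGraph.top_adj]
      rintro rfl; exact hv hu
    set f : Fin n → Finset (Fin n) :=
      fun u => if h : u ∈ Q₀ then (huniq u v (hadj u h)).choose else ∅ with hfdef
    apply Finset.card_le_card_of_injOn f
    · intro u hu
      have hspec := (huniq u v (hadj u hu)).choose_spec.1
      rw [Finset.mem_coe] at hu ⊢; rw [Finset.mem_filter]
      simp only [hfdef, dif_pos hu]
      exact ⟨hspec.1, hspec.2.2⟩
    · intro u1 h1 u2 h2 hfe
      simp only [Finset.mem_coe] at h1 h2
      by_contra hne
      have hadj12 : (⊤ : SimpleGraph (Fin n)).Adj u1 u2 := by simpa using hne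
      have hs1 := (huniq u1 v (hadj u1 h1)).choose_spec.1
      have hs2 := (huniq u2 v (hadj u2 h2)).choose_spec.1
      simp only [hfdef, dif_pos h1, dif_pos h2] at hfe
      have hu2 : u2 ∈ (huniq u1 v (hadj u1 h1)).choose := by rw [hfe]; exact hs2.2.1
      have hR : Q₀ = (huniq u1 v (hadj u1 h1)).choose :=
        (huniq u1 u2 hadj12).unique ⟨hQ₀P, h1, h2⟩ ⟨hs1.1, hs1.2.1, hu2⟩
      exact hv (by rw [hR]; exact hs1.2.2)
  -- |P| ≥ m
  have hPm : Q₀.card ≤ P.card :=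
    le_trans (key w hw) (Finset.card_le_card (Finset.filter_subset _ _))
  -- double counting
  have hsum_eq : ∑ Q ∈ P, Q.card = ∑ v : Fin n, (P.filter (fun Q => v ∈ Q)).card := by
    simp only [Finset.card_filter]
    rw [Finset.sum_comm]
    apply Finset.sum_congr rfl
    intro Q _
    rw [← Finset.card_filter]
    congr 1
    ext x
    simp
  have hlow : (n - Q₀.card) * Q₀.card ≤ ∑ Q ∈ P, Q.card := by
    rw [hsum_eq]
    calc (n - Q₀.card) * Q₀.card
        = ∑ _v ∈ Q₀ᶜ, Q₀.card := by
          rw [Finset.sum_const, smul_eq_mul, Finset.card_compl, Fintype.card_fin]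
      _ ≤ ∑ v ∈ Q₀ᶜ, (P.filter (fun Q => v ∈ Q)).card :=
          Finset.sum_le_sum (fun v hv => key v (Finset.mem_compl.mp hv))
      _ ≤ ∑ v : Fin n, (P.filter (fun Q => v ∈ Q)).card :=
          Finset.sum_le_sum_of_subset (Finset.subset_univ _)
  have hupp : ∑ Q ∈ P, Q.card ≤ P.card * Q₀.card := by
    have := Finset.sum_le_card_nsmul P (fun Q => Q.card) Q₀.card (fun Q hQ => hmax Q hQ)
    simpa [smul_eq_mul] using this
  have hnm : n - Q₀.card ≤ P.card :=
    Nat.le_of_mul_le_mul_right (le_trans hlow hupp) (by omega)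
  have hn : n ≤ 2 * P.card := by omega
  have hnr : (n : ℝ) ≤ 2 * P.card := by exact_mod_cast hn
  linarith
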